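/- Let β ≥ 1, α < β + 1 and λ ≠ 0. For x > 0, the function H(x) = x^{β−α+1}/(β−α+1) · ∑_{n=0}^∞ [ (c)_n / ((c+1)_n (3/2)_n) ] (λ²x^{2β}/4)ⁿ/n!, where c = −α/(2β) + 1/(2β) + 1/2, satisfies H'(x) = sinh(λx^β)/(λx^α). -/

import Mathlib

noncomputable def poch (a : ℝ) (n : ℕ) : ℝ := ∏ i ∈ Finset.range n, (a + (i : ℝ))

lemma poch_succ (a : ℝ) (n : ℕ) : poch a (n+1) = poch a n * (a + n) :=
  Finset.prod_range_succ _ _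

lemma poch_pos {a : ℝ} (ha : 0 < a) (n : ℕ) : 0 < poch a n := by
  induction n with
  | zero => simp [poch]
  | succ n ih => rw [poch_succ]; positivity

lemma poch_ratio (a : ℝ) (n : ℕ) : poch (a+1) n * a = poch a n * (a + n) := by
  induction n with
  | zero => simp [poch]
  | succ n ih =>
    rw [poch_succ, poch_succ]
    push_cast
    linear_combination (a+1+(n:ℝ)) * ih

lemma poch_three_half (n : ℕ) :
    poch (3/2) n * (n.factorial : ℝ) * 4 ^ n = ((2*n+1).factorial : ℝ) := by
  induction n with
  | zero => simp [poch]
  | succ n ih =>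
    have h : (2*(n+1)+1).factorial = (2*n+1).factorial * ((2*n+2) * (2*n+3)) := by
      have : 2*(n+1)+1 = (2*n+2)+1 := by ring
      rw [this]
      rw [Nat.factorial_succ]
      have : 2*n+2 = (2*n+1)+1 := by ring
      rw [this, Nat.factorial_succ]
      ring
    rw [poch_succ, h, Nat.factorial_succ, pow_succ]
    push_cast
    linear_combination (4*(3/2+(n:ℝ))*((n:ℝ)+1)) * ih

theorem stmt_8 (β α l : ℝ) (hβ : 1 ≤ β) (hα : α < β + 1) (hl : l ≠ 0)
    (c : ℝ) (hc : c = -α / (2 * β) + 1 / (2 * β) + 1 / 2) (x : ℝ) (hx : 0 < x) :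
    HasDerivAt (fun y : ℝ => y ^ (β - α + 1) / (β - α + 1) *
        ∑' n : ℕ, poch c n / (poch (c + 1) n * poch (3/2) n) *
          (l ^ 2 * y ^ (2 * β) / 4) ^ n / (n.factorial : ℝ))
      (Real.sinh (l * x ^ β) / (l * x ^ α)) x := by
  have hβ0 : 0 < β := by linarith
  have hp0 : 0 < β - α + 1 := by linarith
  have hcc : c = (β - α + 1) / (2 * β) := by rw [hc]; field_simp; ring
  have hc0 : 0 < c := by rw [hcc]; positivity
  have hq : ∀ n : ℕ, (0:ℝ) < β - α + 1 + 2*β*n := fun n => by positivity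
  have hcn : ∀ n : ℕ, (0:ℝ) < c + n := fun n => by positivity
  set g : ℕ → ℝ → ℝ := fun n y => y ^ (β - α + 1) / (β - α + 1) *
      (poch c n / (poch (c + 1) n * poch (3/2) n) *
        (l ^ 2 * y ^ (2 * β) / 4) ^ n / (n.factorial : ℝ)) with hg
  set g' : ℕ → ℝ → ℝ := fun n y =>
      (l^2)^n * y ^ (β - α + 2*β*n) / (((2*n+1).factorial : ℝ)) with hg'
  -- key pointwise identity
  have hkey : ∀ (n : ℕ) (y : ℝ), 0 < y → g n y =
      (l^2)^n * y ^ (β - α + 1 + 2*β*n) / (((2*n+1).factorial : ℝ) * (β - α + 1 + 2*β*n)) := by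
    intro n y hy
    have h1 := poch_ratio c n
    have h2 := poch_three_half n
    have hP1 := poch_pos hc0 n
    have hP2 := poch_pos (by linarith : (0:ℝ) < c + 1) n
    have hP3 := poch_pos (by norm_num : (0:ℝ) < 3/2) n
    have e1 : y ^ (2*β*(n:ℝ)) = (y ^ (2*β))^n := by
      rw [← Real.rpow_natCast (y ^ (2*β)) n, ← Real.rpow_mul hy.le]
    have e2 : y ^ (β - α + 1 + 2*β*n) = y ^ (β - α + 1) * (y ^ (2*β))^n := by
      rw [← e1, ← Real.rpow_add hy]
    have hcq : (β - α + 1 + 2*β*n) = 2*β*(c + n) := by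
      rw [hcc]; field_simp
    have hfac : (n.factorial : ℝ) ≠ 0 := Nat.cast_ne_zero.mpr n.factorial_ne_zero
    have hfac2 : (((2*n+1).factorial : ℝ)) ≠ 0 := Nat.cast_ne_zero.mpr (2*n+1).factorial_ne_zero
    have hbac : β - α + 1 = 2*β*c := by rw [hcc]; field_simp
    have r2 : poch c n / (poch (c + 1) n * poch (3/2) n) = c / ((c + n) * poch (3/2) n) := by
      rw [div_eq_div_iff (by positivity) (by positivity)]
      linear_combination poch (3/2) n * h1.symm
    simp only [hg]
    rw [r2, e2, ← h2, hcq, hbac]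
    have h4 : ((4:ℝ))^n ≠ 0 := by positivity
    field_simp
    ring_nf
    field_simp
    rw [← mul_pow]; norm_num
  have hx2 : 0 < x/2 := by linarith
  have hxmem : x ∈ Set.Ioo (x/2) (x+1) := ⟨by linarith, by linarith⟩
  have hypos : ∀ y ∈ Set.Ioo (x/2) (x+1), (0:ℝ) < y := fun y hy => lt_trans hx2 hy.1
  -- derivative of each term
  have hderiv : ∀ (n : ℕ) (y : ℝ), y ∈ Set.Ioo (x/2) (x+1) → HasDerivAt (g n) (g' n y) y := by
    intro n y hy
    have hy0 : 0 < y := hypos y hy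
    have hF : HasDerivAt (fun z : ℝ => (l^2)^n * z ^ (β - α + 1 + 2*β*n) /
        (((2*n+1).factorial : ℝ) * (β - α + 1 + 2*β*n))) (g' n y) y := by
      have h := (Real.hasDerivAt_rpow_const (x := y) (p := β - α + 1 + 2*β*n) (Or.inl hy0.ne'))
      have h2 := (h.const_mul ((l^2)^n)).div_const (((2*n+1).factorial : ℝ) * (β - α + 1 + 2*β*n))
      refine h2.congr_deriv ?_
      have e3 : β - α + 1 + 2*β*(n:ℝ) - 1 = β - α + 2*β*n := by ring
      rw [e3]
      have hfac2 : (((2*n+1).factorial : ℝ)) ≠ 0 := Nat.cast_ne_zero.mpr (2*n+1).factorial_ne_zero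
      simp only [hg']
      field_simp
    apply hF.congr_of_eventuallyEq
    filter_upwards [isOpen_Ioi.eventually_mem (Set.mem_Ioi.mpr hy0)] with z hz
    exact hkey n z hz
  -- summable bound on derivatives
  set C : ℝ := (x/2) ^ (β - α) + (x+1) ^ (β - α) with hC
  set u : ℕ → ℝ := fun n => C * (l^2 * (x+1)^(2*β))^n / ((2*n+1).factorial : ℝ) with hu_def
  have hbound : ∀ (n : ℕ) (y : ℝ), y ∈ Set.Ioo (x/2) (x+1) → ‖g' n y‖ ≤ u n := by
    intro n y hy
    have hy0 : 0 < y := hypos y hy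
    have e4 : y ^ (β - α + 2*β*(n:ℝ)) = y ^ (β - α) * (y ^ (2*β))^n := by
      rw [← Real.rpow_natCast (y ^ (2*β)) n, ← Real.rpow_mul hy0.le, ← Real.rpow_add hy0]
    have hA : y ^ (β - α) ≤ C := by
      rcases le_or_gt 0 (β - α) with h | h
      · have : y ^ (β - α) ≤ (x+1) ^ (β - α) := Real.rpow_le_rpow hy0.le hy.2.le h
        have h2 : (0:ℝ) ≤ (x/2) ^ (β - α) := (Real.rpow_pos_of_pos hx2 _).le
        rw [hC]; linarith
      · have : y ^ (β - α) ≤ (x/2) ^ (β - α) :=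
          Real.rpow_le_rpow_of_nonpos hx2 hy.1.le h.le
        have h2 : (0:ℝ) ≤ (x+1) ^ (β - α) := (Real.rpow_pos_of_pos (by linarith) _).le
        rw [hC]; linarith
    have hB : (y ^ (2*β))^n ≤ ((x+1) ^ (2*β))^n := by
      apply pow_le_pow_left₀ (Real.rpow_pos_of_pos hy0 _).le
      exact Real.rpow_le_rpow hy0.le hy.2.le (by positivity)
    have hAB : y ^ (β - α) * (y ^ (2*β))^n ≤ C * ((x+1) ^ (2*β))^n :=
      mul_le_mul hA hB (by positivity) (le_trans (by positivity) hA)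
    have hnorm : ‖g' n y‖ = (l^2)^n * (y ^ (β - α) * (y ^ (2*β))^n) / ((2*n+1).factorial : ℝ) := by
      rw [hg']
      simp only [e4]
      rw [Real.norm_eq_abs, abs_of_nonneg (by positivity)]
    rw [hnorm, hu_def]
    simp only [mul_pow]
    rw [div_le_div_iff_of_pos_right (by positivity)]
    calc (l^2)^n * (y ^ (β - α) * (y ^ (2*β))^n)
        ≤ (l^2)^n * (C * ((x+1)^(2*β))^n) := mul_le_mul_of_nonneg_left hAB (by positivity)
      _ = C * ((l^2)^n * ((x+1)^(2*β))^n) := by ring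
  have hCpos : 0 < C := by rw [hC]; positivity
  have hu : Summable u := by
    have hue : u = fun n => C * ((l^2 * (x+1)^(2*β))^n / ((2*n+1).factorial : ℝ)) := by
      funext n; rw [hu_def]; ring
    rw [hue]
    apply Summable.mul_left
    have hr : (0:ℝ) ≤ l^2 * (x+1)^(2*β) := by positivity
    have hs : Summable (fun n : ℕ => (l^2 * (x+1)^(2*β))^n / (n.factorial : ℝ)) :=
      Real.summable_pow_div_factorial _
    refine Summable.of_nonneg_of_le (fun n => by positivity) (fun n => ?_) hs
    apply div_le_div_of_nonneg_left (by positivity) (by positivity)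
    exact_mod_cast Nat.factorial_le (by omega)
  have hg0 : Summable (fun n => g n x) := by
    have hs : Summable (fun n : ℕ =>
        (x ^ (β - α + 1) / (β - α + 1)) * ((l^2 * x^(2*β))^n / (n.factorial : ℝ))) := by
      apply Summable.mul_left
      exact Real.summable_pow_div_factorial _
    refine Summable.of_nonneg_of_le ?_ ?_ hs
    · intro n
      rw [hkey n x hx]
      positivity
    · intro n
      rw [hkey n x hx]
      have e4 : x ^ (β - α + 1 + 2*β*(n:ℝ)) = x ^ (β - α + 1) * (x ^ (2*β))^n := by
        rw [← Real.rpow_natCast (x ^ (2*β)) n, ← Real.rpow_mul hx.le, ← Real.rpow_add hx]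
      rw [e4]
      have h1 : (n.factorial : ℝ) ≤ ((2*n+1).factorial : ℝ) :=
        by exact_mod_cast Nat.factorial_le (by omega)
      have h2 : (β - α + 1) ≤ β - α + 1 + 2*β*n := by
        have h3 : (0:ℝ) ≤ 2*β*n := by positivity
        linarith
      have hrw : x ^ (β-α+1) / (β-α+1) * ((l^2 * x^(2*β))^n / (n.factorial : ℝ))
          = (l^2)^n * (x ^ (β-α+1) * (x^(2*β))^n) / ((β-α+1) * (n.factorial : ℝ)) := by
        have hfp : (n.factorial : ℝ) ≠ 0 := Nat.cast_ne_zero.mpr n.factorial_ne_zero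
        rw [mul_pow]
        field_simp
      rw [hrw]
      apply div_le_div_of_nonneg_left (by positivity) (by positivity)
      calc (β-α+1) * (n.factorial : ℝ) ≤ (β-α+1+2*β*n) * ((2*n+1).factorial : ℝ) :=
            mul_le_mul h2 h1 (by positivity) (hq n).le
        _ = ((2*n+1).factorial : ℝ) * (β-α+1+2*β*n) := by ring
  -- the value of the sum of derivatives at x
  have hsum : HasSum (fun n => g' n x) (Real.sinh (l * x ^ β) / (l * x ^ α)) := by
    have h := (Real.hasSum_sinh (l * x ^ β)).div_const (l * x ^ α)
    have ht : ∀ n : ℕ, (l * x ^ β) ^ (2*n+1) / (((2*n+1).factorial : ℝ)) / (l * x ^ α) = g' n x := by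
      intro n
      have hxb : (x ^ β : ℝ) ^ (2*n+1) = x ^ (β * (2*(n:ℝ)+1)) := by
        rw [← Real.rpow_natCast (x ^ β) (2*n+1), ← Real.rpow_mul hx.le]
        push_cast
        ring_nf
      have hsplit : x ^ (β * (2*(n:ℝ)+1)) = x ^ (β - α + 2*β*(n:ℝ)) * x ^ α := by
        rw [← Real.rpow_add hx]
        ring_nf
      have hxα : (x : ℝ) ^ α ≠ 0 := (Real.rpow_pos_of_pos hx α).ne'
      have hfac2 : (((2*n+1).factorial : ℝ)) ≠ 0 := Nat.cast_ne_zero.mpr (2*n+1).factorial_ne_zero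
      have hlp : l ^ (2*n+1) = (l^2)^n * l := by
        rw [pow_succ, pow_mul]
      rw [hg', mul_pow, hxb, hsplit, hlp]
      field_simp
    rwa [funext ht] at h
  -- assemble
  have hfun : (fun y : ℝ => y ^ (β - α + 1) / (β - α + 1) *
        ∑' n : ℕ, poch c n / (poch (c + 1) n * poch (3/2) n) *
          (l ^ 2 * y ^ (2 * β) / 4) ^ n / (n.factorial : ℝ)) = fun y => ∑' n : ℕ, g n y := by
    funext y
    rw [hg]
    exact tsum_mul_left.symm
  rw [hfun, ← hsum.tsum_eq]
  exact hasDerivAt_tsum_of_isPreconnected hu isOpen_Ioo isPreconnected_Ioo hderiv hbound hxmem hg0 hxmem
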